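/- Let X be a left-continuous compact Hausdorff semigroup and let R be a minimal right ideal of X. Then R equals the union, over all minimal left ideals L of X, of the sets R ∩ L, each such intersection R ∩ L is an Ellis subgroup of L, and these intersections are pairwise disjoint for distinct minimal left ideals L; in particular, R is a disjoint union of Ellis subgroups. -/

import Mathlib

open Pointwise

variable {X : Type*}

/-- A left ideal of a semigroup: a nonempty subset `I` with `X * I ⊆ I`. -/
def IsLeftIdeal [Mul X] (I : Set X) : Prop :=
  I.Nonempty ∧ ∀ x : X, ∀ i ∈ I, x * i ∈ I

/-- A right ideal of a semigroup: a nonempty subset `R` with `R * X ⊆ R`. -/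
def IsRightIdeal [Mul X] (R : Set X) : Prop :=
  R.Nonempty ∧ ∀ r ∈ R, ∀ x : X, r * x ∈ R

/-- A two-sided ideal of a semigroup. -/
def IsSemigroupIdeal [Mul X] (I : Set X) : Prop :=
  IsLeftIdeal I ∧ IsRightIdeal I

/-- A minimal left ideal: a left ideal containing no proper left subideal. -/
def IsMinLeftIdeal [Mul X] (I : Set X) : Prop :=
  IsLeftIdeal I ∧ ∀ J ⊆ I, IsLeftIdeal J → J = I

/-- A minimal right ideal: a right ideal containing no proper right subideal. -/
def IsMinRightIdeal [Mul X] (R : Set X) : Prop :=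
  IsRightIdeal R ∧ ∀ S ⊆ R, IsRightIdeal S → S = R

/-- A minimal two-sided ideal. -/
def IsMinSemigroupIdeal [Mul X] (I : Set X) : Prop :=
  IsSemigroupIdeal I ∧ ∀ J ⊆ I, IsSemigroupIdeal J → J = I

section Aux

variable [Semigroup X] [TopologicalSpace X] [CompactSpace X] [T2Space X]

private lemma range_mul_leftIdeal (a : X) : IsLeftIdeal (Set.range (· * a)) :=
  ⟨⟨a * a, a, rfl⟩, by rintro x _ ⟨y, rfl⟩; exact ⟨x * y, mul_assoc x y a⟩⟩

private lemma minLeft_range {L : Set X} (hL : IsMinLeftIdeal L) {p : X} (hp : p ∈ L) :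
    Set.range (· * p) = L := by
  apply hL.2
  · rintro _ ⟨x, rfl⟩; exact hL.1.2 x p hp
  · exact range_mul_leftIdeal p

private lemma minLeft_closed (hX : ∀ a : X, Continuous fun x : X => x * a)
    {L : Set X} (hL : IsMinLeftIdeal L) : IsClosed L := by
  obtain ⟨p, hp⟩ := hL.1.1
  rw [← minLeft_range hL hp]
  exact (isCompact_range (hX p)).isClosed

private lemma minRight_range {R : Set X} (hR : IsMinRightIdeal R) {p : X} (hp : p ∈ R) :
    Set.range (p * ·) = R := by
  apply hR.2
  · rintro _ ⟨x, rfl⟩; exact hR.1.2 p hp x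
  · exact ⟨⟨p * p, p, rfl⟩, by rintro _ ⟨y, rfl⟩ x; exact ⟨y * x, (mul_assoc p y x).symm⟩⟩

private lemma exists_minLeft (hX : ∀ a : X, Continuous fun x : X => x * a) (a : X) :
    ∃ L : Set X, IsMinLeftIdeal L := by
  have hzorn : ∀ c ⊆ {I : Set X | IsClosed I ∧ IsLeftIdeal I}, IsChain (· ⊆ ·) c →
      ∃ lb ∈ {I : Set X | IsClosed I ∧ IsLeftIdeal I}, ∀ s ∈ c, lb ⊆ s := by
    intro c hcS hchain
    rcases c.eq_empty_or_nonempty with rfl | hcne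
    · exact ⟨Set.univ, ⟨isClosed_univ, ⟨⟨a, trivial⟩, fun _ _ _ => trivial⟩⟩, by simp⟩
    · have hnon : (⋂₀ c).Nonempty := by
        rw [Set.sInter_eq_iInter]
        haveI : Nonempty c := hcne.coe_sort
        apply IsCompact.nonempty_iInter_of_directed_nonempty_isCompact_isClosed
        · exact DirectedOn.directed_val (IsChain.directedOn hchain.symm)
        · exact fun i => (hcS i.prop).2.1
        · exact fun i => ((hcS i.prop).1).isCompact
        · exact fun i => (hcS i.prop).1
      refine ⟨⋂₀ c, ⟨isClosed_sInter fun t ht => (hcS ht).1, hnon, ?_⟩,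
        fun s hs => Set.sInter_subset_of_mem hs⟩
      intro x i hi
      exact Set.mem_sInter.mpr fun t ht => (hcS ht).2.2 x i (Set.mem_sInter.mp hi t ht)
  obtain ⟨M, hMmin⟩ := zorn_superset {I : Set X | IsClosed I ∧ IsLeftIdeal I} hzorn
  obtain ⟨hMc, hMI⟩ := hMmin.prop
  refine ⟨M, hMI, ?_⟩
  intro J hJM hJ
  obtain ⟨j, hjJ⟩ := hJ.1
  have hjM : j ∈ M := hJM hjJ
  have hsub : Set.range (· * j) ⊆ M := by rintro _ ⟨x, rfl⟩; exact hMI.2 x j hjM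
  have hmem : Set.range (· * j) ∈ {I : Set X | IsClosed I ∧ IsLeftIdeal I} :=
    ⟨(isCompact_range (hX j)).isClosed, range_mul_leftIdeal j⟩
  have hMsub : M ⊆ Set.range (· * j) := hMmin.2 hmem hsub
  have hsubJ : Set.range (· * j) ⊆ J := by rintro _ ⟨x, rfl⟩; exact hJ.2 x j hjJ
  exact Set.Subset.antisymm hJM (hMsub.trans hsubJ)

private lemma exists_idem' (hX : ∀ a : X, Continuous fun x : X => x * a)
    {L : Set X} (hL : IsMinLeftIdeal L) {p : X} (hp : p ∈ L) :
    ∃ u ∈ L, u * u = u ∧ u * p = p := by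
  have hLc := minLeft_closed hX hL
  -- L * p is a left ideal inside L, hence equals L, so some l ∈ L satisfies l * p = p
  have hlp : ∃ l ∈ L, l * p = p := by
    have hidl : IsLeftIdeal {y : X | ∃ l ∈ L, l * p = y} := by
      constructor
      · exact ⟨p * p, p, hp, rfl⟩
      · rintro x _ ⟨l, hl, rfl⟩
        exact ⟨x * l, hL.1.2 x l hl, mul_assoc x l p⟩
    have hsub : {y : X | ∃ l ∈ L, l * p = y} ⊆ L := by
      rintro _ ⟨l, hl, rfl⟩; exact hL.1.2 l p hp
    have heq := hL.2 _ hsub hidl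
    rw [← heq] at hp
    exact hp
  set S : Set X := L ∩ {x : X | x * p = p} with hS
  have hScl : IsClosed S := hLc.inter (isClosed_singleton.preimage (hX p))
  have hSne : S.Nonempty := by
    obtain ⟨l, hl, hlp⟩ := hlp
    exact ⟨l, hl, hlp⟩
  have hSmul : ∀ x ∈ S, ∀ y ∈ S, x * y ∈ S := by
    rintro x ⟨hxL, hxp⟩ y ⟨hyL, hyp⟩
    refine ⟨hL.1.2 x y hyL, ?_⟩
    show (x * y) * p = p
    rw [mul_assoc, hyp, hxp]
  obtain ⟨u, huS, huu⟩ :=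
    exists_idempotent_in_compact_subsemigroup hX S hSne hScl.isCompact hSmul
  exact ⟨u, huS.1, huu, huS.2⟩

private lemma right_id {L : Set X} (hL : IsMinLeftIdeal L) {u a : X}
    (hu : u ∈ L) (huu : u * u = u) (ha : a ∈ L) : a * u = a := by
  obtain ⟨x, hx⟩ : a ∈ Set.range (· * u) := (minLeft_range hL hu).symm ▸ ha
  simp only at hx
  rw [← hx, mul_assoc, huu]

private lemma inv_left {L : Set X} (hL : IsMinLeftIdeal L) {u b : X}
    (hu : u ∈ L) (huu : u * u = u) (hb : b ∈ L) (hub : u * b = b) :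
    ∃ q ∈ L, u * q = q ∧ q * b = u := by
  obtain ⟨x, hx⟩ : u ∈ Set.range (· * b) := (minLeft_range hL hb).symm ▸ hu
  simp only at hx
  refine ⟨u * (x * u), hL.1.2 u _ (hL.1.2 x u hu), ?_, ?_⟩
  · rw [← mul_assoc, huu]
  · rw [mul_assoc u (x * u) b, mul_assoc x u b, hub, hx, huu]

private lemma inv_two {L : Set X} (hL : IsMinLeftIdeal L) {u b : X}
    (hu : u ∈ L) (huu : u * u = u) (hb : b ∈ L) (hub : u * b = b) :
    ∃ q ∈ L, u * q = q ∧ q * b = u ∧ b * q = u := by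
  obtain ⟨q, hq, huq, hqb⟩ := inv_left hL hu huu hb hub
  obtain ⟨q', hq', huq', hq'q⟩ := inv_left hL hu huu hq huq
  refine ⟨q, hq, huq, hqb, ?_⟩
  have h1 : b * q = u * (b * q) := by rw [← mul_assoc, hub]
  rw [h1, ← hq'q, mul_assoc q' q (b * q), ← mul_assoc q b q, hqb, huq, hq'q]

private lemma key (hX : ∀ a : X, Continuous fun x : X => x * a)
    {R : Set X} (hR : IsMinRightIdeal R) {L : Set X} (hL : IsMinLeftIdeal L) :
    ∃ u, u ∈ R ∧ u ∈ L ∧ u * u = u := by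
  obtain ⟨r, hr⟩ := hR.1.1
  obtain ⟨l, hl⟩ := hL.1.1
  have hpR : r * l ∈ R := hR.1.2 r hr l
  have hpL : r * l ∈ L := hL.1.2 r l hl
  obtain ⟨u, hu, huu, hup⟩ := exists_idem' hX hL hpL
  obtain ⟨q, hq, huq, hqp, hpq⟩ := inv_two hL hu huu hpL hup
  refine ⟨u, ?_, hu, huu⟩
  rw [← hpq]
  exact hR.1.2 _ hpR q

private lemma ellis (hX : ∀ a : X, Continuous fun x : X => x * a)
    {R : Set X} (hR : IsMinRightIdeal R) {L : Set X} (hL : IsMinLeftIdeal L) :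
    ∃ u ∈ L, u * u = u ∧ R ∩ L = {u} * L := by
  obtain ⟨u, huR, huL, huu⟩ := key hX hR hL
  refine ⟨u, huL, huu, ?_⟩
  ext a
  rw [Set.singleton_mul]
  constructor
  · rintro ⟨haR, haL⟩
    have hbL : u * a ∈ L := hL.1.2 u a haL
    have hub : u * (u * a) = u * a := by rw [← mul_assoc, huu]
    obtain ⟨q, hq, huq, hqb, hbq⟩ := inv_two hL huL huu hbL hub
    have hqu : q * u = q := right_id hL huL huu hq
    have hqa : q * a = u := by rw [← hqu, mul_assoc]; exact hqb
    have heL : a * q ∈ L := hL.1.2 a q hq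
    have heR : a * q ∈ R := hR.1.2 a haR q
    have heidem : (a * q) * (a * q) = a * q := by
      rw [mul_assoc a q (a * q), ← mul_assoc q a q, hqa, ← mul_assoc, right_id hL huL huu haL]
    have hea : (a * q) * a = a := by
      rw [mul_assoc, hqa, right_id hL huL huu haL]
    obtain ⟨y, hy⟩ : u ∈ Set.range ((a * q) * ·) := (minRight_range hR heR).symm ▸ huR
    simp only at hy
    have h1 : (a * q) * u = u := by rw [← hy, ← mul_assoc, heidem]
    have h2 : (a * q) * u = a * q := right_id hL huL huu heL
    have heu : a * q = u := h2.symm.trans h1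
    have hua : u * a = a := by rw [← heu]; exact hea
    exact ⟨a, haL, hua⟩
  · rintro ⟨l, hlL, rfl⟩
    exact ⟨hR.1.2 u huR l, hL.1.2 u l hlL⟩

end Aux

/-- A minimal right ideal `R` is the disjoint union, over all minimal left ideals `L`,
of the Ellis subgroups `R ∩ L`. -/
theorem stmt10 [Semigroup X] [TopologicalSpace X] [CompactSpace X] [T2Space X]
    (hX : ∀ a : X, Continuous fun x : X => x * a)
    (R : Set X) (hR : IsMinRightIdeal R) :
    (R = ⋃ L ∈ {L : Set X | IsMinLeftIdeal L}, R ∩ L) ∧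
    (∀ L : Set X, IsMinLeftIdeal L → ∃ u ∈ L, u * u = u ∧ R ∩ L = {u} * L) ∧
    (∀ L L' : Set X, IsMinLeftIdeal L → IsMinLeftIdeal L' → L ≠ L' →
      Disjoint (R ∩ L) (R ∩ L')) := by
  refine ⟨?_, fun L hL => ellis hX hR hL, ?_⟩
  · apply Set.Subset.antisymm
    · intro r hr
      -- find a minimal left ideal containing r
      obtain ⟨L₀, hL₀⟩ := exists_minLeft hX r
      obtain ⟨u, huR, huL, huu⟩ := key hX hR hL₀
      obtain ⟨x, hx⟩ : r ∈ Set.range (u * ·) := (minRight_range hR huR).symm ▸ hr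
      simp only at hx
      have hur : u * r = r := by rw [← hx, ← mul_assoc, huu]
      have hmin : IsMinLeftIdeal (Set.range (· * r)) := by
        refine ⟨range_mul_leftIdeal r, ?_⟩
        intro J hJ hJI
        obtain ⟨j, hjJ⟩ := hJI.1
        obtain ⟨y, hy⟩ := hJ hjJ
        simp only at hy
        apply Set.Subset.antisymm hJ
        rintro _ ⟨w, rfl⟩
        show w * r ∈ J
        have hyu : y * u ∈ L₀ := hL₀.1.2 y u huL
        have hwu : w * u ∈ L₀ := hL₀.1.2 w u huL
        obtain ⟨v, hv⟩ : w * u ∈ Set.range (· * (y * u)) :=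
          (minLeft_range hL₀ hyu).symm ▸ hwu
        simp only at hv
        have expand : w * r = v * j := by
          rw [← hy, ← hx, ← mul_assoc w u x, ← hv, mul_assoc, mul_assoc]
        rw [expand]
        exact hJI.2 v j hjJ
      have hrmem : r ∈ Set.range (· * r) := ⟨u, hur⟩
      exact Set.mem_biUnion (show Set.range (· * r) ∈ {L : Set X | IsMinLeftIdeal L} from hmin)
        ⟨hr, hrmem⟩
    · exact Set.iUnion₂_subset fun L _ => Set.inter_subset_left
  · intro L L' hL hL' hne
    rw [Set.disjoint_left]
    rintro a ⟨-, haL⟩ ⟨-, haL'⟩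
    apply hne
    rw [← minLeft_range hL haL, ← minLeft_range hL' haL']
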